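/- For n = 2 and θ₀ = θ₁ = π/3, the 4×4 quantum transition probability matrix P^q, regarded as a real matrix indexed by pairs of bits via the identification of 2-bit strings (j₁, j₀) with pairs, is not a Kronecker product: there exist no 2×2 real matrices M and N such that P^q_{(i₁,i₀),(j₁,j₀)} = M_{i₁,j₁} · N_{i₀,j₀} for all bits i₁,i₀,j₁,j₀. -/
import Mathlib


/-- The bit `I_{ℓ-1}` of an `n`-bit string, with the convention `I_{-1} = 0`. -/
def prevBit (n : ℕ) (I : Fin n → ZMod 2) (ℓ : Fin n) : ZMod 2 :=
  if 0 < (ℓ : ℕ) then I ⟨(ℓ : ℕ) - 1, lt_of_le_of_lt (Nat.sub_le _ _) ℓ.isLt⟩ else 0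

/-- Quantum random-walk kernel, with the convention `I_{-1} = 0`. -/
noncomputable def fq (n : ℕ) (θ : Fin n → ℝ) (I : Fin n → ZMod 2) : ℝ :=
  ∏ ℓ : Fin n,
    if I ℓ + prevBit n I ℓ = 0 then Real.cos (θ ℓ / 2) ^ 2 else Real.sin (θ ℓ / 2) ^ 2

/-- Quantum transition probability matrix. -/
noncomputable def Pq (n : ℕ) (θ : Fin n → ℝ) :
    Matrix (Fin n → ZMod 2) (Fin n → ZMod 2) ℝ :=
  Matrix.of fun J' J => fq n θ (J' + J)

lemma sqrt3_sq : Real.sqrt 3 ^ 2 = 3 := Real.sq_sqrt (by norm_num)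

lemma pq00 : Pq 2 ![Real.pi / 3, Real.pi / 3] ![0, 0] ![0, 0] = 9/16 := by
  simp [Pq, fq, prevBit, Fin.prod_univ_two, show (1+1:ZMod 2)=0 from rfl]
  norm_num [show Real.pi/3/2 = Real.pi/6 by ring, Real.cos_pi_div_six]
  nlinarith [sqrt3_sq]

lemma pq10 : Pq 2 ![Real.pi / 3, Real.pi / 3] ![0, 0] ![1, 0] = 1/16 := by
  simp [Pq, fq, prevBit, Fin.prod_univ_two, show (1+1:ZMod 2)=0 from rfl]
  norm_num [show Real.pi/3/2 = Real.pi/6 by ring, Real.cos_pi_div_six, Real.sin_pi_div_six]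

lemma pq01 : Pq 2 ![Real.pi / 3, Real.pi / 3] ![0, 0] ![0, 1] = 3/16 := by
  simp [Pq, fq, prevBit, Fin.prod_univ_two, show (1+1:ZMod 2)=0 from rfl]
  norm_num [show Real.pi/3/2 = Real.pi/6 by ring, Real.cos_pi_div_six, Real.sin_pi_div_six]
  nlinarith [sqrt3_sq]

lemma pq11 : Pq 2 ![Real.pi / 3, Real.pi / 3] ![0, 0] ![1, 1] = 3/16 := by
  simp [Pq, fq, prevBit, Fin.prod_univ_two, show (1+1:ZMod 2)=0 from rfl]
  norm_num [show Real.pi/3/2 = Real.pi/6 by ring, Real.cos_pi_div_six, Real.sin_pi_div_six]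
  nlinarith [sqrt3_sq]

theorem stmt_15 :
    ¬ ∃ M N : Matrix (ZMod 2) (ZMod 2) ℝ,
        ∀ i₁ i₀ j₁ j₀ : ZMod 2,
          Pq 2 ![Real.pi / 3, Real.pi / 3] ![i₀, i₁] ![j₀, j₁] =
            M i₁ j₁ * N i₀ j₀ := by
  rintro ⟨M, N, h⟩
  have h1 := h 0 0 0 0; rw [pq00] at h1
  have h2 := h 0 0 0 1; rw [pq10] at h2
  have h3 := h 0 0 1 0; rw [pq01] at h3
  have h4 := h 0 0 1 1; rw [pq11] at h4
  nlinarith [h1, h2, h3, h4, mul_self_nonneg (M 0 0 * N 0 0)]
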